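/- Let Φ be a unital completely positive map on M_N(ℂ) that is self-adjoint with respect to the KMS inner product, and let Φ(A) = Σ_{j=1}^M V_j* A V_j be a minimal Kraus representation with σ^{−1/2} V_j σ^{1/2} = V_j* for each j. Then Φ is an extreme point of the convex set of unital completely positive maps that are self-adjoint with respect to the KMS inner product if and only if the family { V_i* V_j + V_j* V_i : 1 ≤ i ≤ j ≤ M } is linearly independent over the real numbers. -/

import Mathlib

set_option maxHeartbeats 2000000
set_option linter.unusedVariables false


open MeasureTheory Matrix
open scoped ComplexOrder

noncomputable section

/-- The algebra of `N × N` complex matrices. -/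
abbrev Mat (N : ℕ) := Matrix (Fin N) (Fin N) ℂ

variable {N : ℕ}

/-- Real power `σ^s` of a positive definite matrix, defined via the spectral decomposition. -/
noncomputable def mpow (σ : Mat N) (hσ : σ.PosDef) (s : ℝ) : Mat N :=
  (hσ.1.eigenvectorUnitary : Mat N) *
    Matrix.diagonal (fun i => ((hσ.1.eigenvalues i ^ s : ℝ) : ℂ)) *
    star (hσ.1.eigenvectorUnitary : Mat N)

/-- Complete positivity of a linear map on `M_N(ℂ)`: existence of a Kraus representation. -/
def IsCP (Φ : Mat N →ₗ[ℂ] Mat N) : Prop :=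
  ∃ (M : ℕ) (V : Fin M → Mat N), ∀ A, Φ A = ∑ j, (V j)ᴴ * A * V j

/-- The KMS inner product `⟨B,A⟩_KMS = Tr[Bᴴ σ^{1/2} A σ^{1/2}]`. -/
def kmsInner (σ : Mat N) (hσ : σ.PosDef) (B A : Mat N) : ℂ :=
  (Bᴴ * mpow σ hσ (1/2) * A * mpow σ hσ (1/2)).trace

/-- Self-adjointness with respect to the KMS inner product. -/
def IsKMSSelfAdjoint (σ : Mat N) (hσ : σ.PosDef) (Φ : Mat N →ₗ[ℂ] Mat N) : Prop :=
  ∀ A B, kmsInner σ hσ B (Φ A) = kmsInner σ hσ (Φ B) A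

lemma mpow_mul_mpow (σ : Mat N) (hσ : σ.PosDef) (s t : ℝ) :
    mpow σ hσ s * mpow σ hσ t = mpow σ hσ (s + t) := by
  have hu : star (hσ.1.eigenvectorUnitary : Mat N) * (hσ.1.eigenvectorUnitary : Mat N) = 1 :=
    Matrix.mem_unitaryGroup_iff'.mp (hσ.1.eigenvectorUnitary).2
  unfold mpow
  simp only [Matrix.mul_assoc]
  rw [← Matrix.mul_assoc (star (hσ.1.eigenvectorUnitary : Mat N)), hu, one_mul,
    ← Matrix.mul_assoc (Matrix.diagonal _), diagonal_mul_diagonal]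
  have hd : (Matrix.diagonal (fun i => ((hσ.1.eigenvalues i ^ s : ℝ) : ℂ) *
      ((hσ.1.eigenvalues i ^ t : ℝ) : ℂ)) : Mat N)
      = Matrix.diagonal (fun i => ((hσ.1.eigenvalues i ^ (s + t) : ℝ) : ℂ)) := by
    have hfun : (fun i => ((hσ.1.eigenvalues i ^ s : ℝ) : ℂ) *
        ((hσ.1.eigenvalues i ^ t : ℝ) : ℂ))
        = fun i => ((hσ.1.eigenvalues i ^ (s + t) : ℝ) : ℂ) := by
      funext i
      rw [← Complex.ofReal_mul, ← Real.rpow_add (hσ.eigenvalues_pos i)]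
    rw [hfun]
  rw [hd]

lemma mpow_herm (σ : Mat N) (hσ : σ.PosDef) (s : ℝ) : (mpow σ hσ s)ᴴ = mpow σ hσ s := by
  unfold mpow
  rw [conjTranspose_mul, conjTranspose_mul, star_eq_conjTranspose, conjTranspose_conjTranspose,
    diagonal_conjTranspose, mul_assoc]
  congr 2
  simp [Pi.star_def]

lemma mpow_zero (σ : Mat N) (hσ : σ.PosDef) : mpow σ hσ 0 = 1 := by
  have hu : (hσ.1.eigenvectorUnitary : Mat N) * star (hσ.1.eigenvectorUnitary : Mat N) = 1 :=
    Matrix.mem_unitaryGroup_iff.mp (hσ.1.eigenvectorUnitary).2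
  unfold mpow
  have hd : (Matrix.diagonal (fun i => ((hσ.1.eigenvalues i ^ (0:ℝ) : ℝ) : ℂ)) : Mat N) = 1 := by
    have : (fun i => ((hσ.1.eigenvalues i ^ (0:ℝ) : ℝ) : ℂ)) = fun _ : Fin N => (1:ℂ) := by
      funext i; rw [Real.rpow_zero]; norm_num
    rw [this, Matrix.diagonal_one]
  rw [hd, mul_one, hu]

lemma mpow_half_inv (σ : Mat N) (hσ : σ.PosDef) :
    mpow σ hσ (1/2) * mpow σ hσ (-(1/2)) = 1 := by
  rw [mpow_mul_mpow]; norm_num [mpow_zero]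

lemma mpow_neg_half_inv (σ : Mat N) (hσ : σ.PosDef) :
    mpow σ hσ (-(1/2)) * mpow σ hσ (1/2) = 1 := by
  rw [mpow_mul_mpow]; norm_num [mpow_zero]

lemma trace_stdBasis_mul (A : Mat N) (p q : Fin N) :
    (Matrix.single q p 1 * A).trace = A p q := by
  classical
  simp [Matrix.trace, Matrix.diag, Matrix.mul_apply, Matrix.single, Matrix.of_apply,
    ite_and, Finset.sum_ite_eq, Finset.sum_ite_eq']

lemma trace_pairing_eq_zero {A : Mat N} (h : ∀ C : Mat N, (C * A).trace = 0) : A = 0 := by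
  ext p q
  have := h (Matrix.single q p 1)
  rw [trace_stdBasis_mul] at this
  simpa using this

lemma conj_sandwich_entry (Vv W : Mat N) (a b p q : Fin N) :
    ((Vvᴴ * Matrix.single a b 1 * W : Mat N)) p q = star (Vv a p) * W b q := by
  classical
  simp [Matrix.mul_apply, Matrix.single, Matrix.conjTranspose_apply, Matrix.of_apply,
    ite_and, Finset.sum_ite_eq, Finset.sum_ite_eq', mul_assoc]

lemma sandwich_conj_entry (Vv W : Mat N) (a b p q : Fin N) :
    ((Vv * Matrix.single a b 1 * Wᴴ : Mat N)) p q = Vv p a * star (W q b) := by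
  classical
  simp [Matrix.mul_apply, Matrix.single, Matrix.conjTranspose_apply, Matrix.of_apply,
    ite_and, Finset.sum_ite_eq, Finset.sum_ite_eq', mul_assoc]

/-- V LI: the maps A ↦ Vᵢᴴ A Vⱼ are jointly LI. -/
lemma li_conj_maps {M : ℕ} {V : Fin M → Mat N} (hmin : LinearIndependent ℂ V)
    (c : Fin M → Fin M → ℂ)
    (h : ∀ A : Mat N, ∑ i, ∑ j, c i j • ((V i)ᴴ * A * V j) = 0) :
    ∀ i j, c i j = 0 := by
  classical
  have hli := Fintype.linearIndependent_iff.mp hmin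
  have key : ∀ (a p b q : Fin N),
      ∑ i, ∑ j, c i j * (star (V i a p) * V j b q) = 0 := by
    intro a p b q
    have h0 := congrFun (congrFun (h (Matrix.single a b 1)) p) q
    simpa [Matrix.sum_apply, Matrix.smul_apply, conj_sandwich_entry, smul_eq_mul] using h0
  have step1 : ∀ (a p : Fin N) (j : Fin M), ∑ i, c i j * star (V i a p) = 0 := by
    intro a p
    have hsum : ∑ j, (∑ i, c i j * star (V i a p)) • V j = 0 := by
      ext b q
      simp only [Matrix.sum_apply, Matrix.smul_apply, smul_eq_mul, Matrix.zero_apply,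
        Finset.sum_mul]
      rw [Finset.sum_comm]
      simpa [mul_assoc] using key a p b q
    exact hli _ hsum
  intro i j
  have hsum : ∑ i, (star (c i j)) • V i = 0 := by
    ext a p
    simp only [Matrix.sum_apply, Matrix.smul_apply, smul_eq_mul, Matrix.zero_apply]
    have := step1 a p j
    have := congrArg star this
    simpa [Finset.sum_comm, star_sum, mul_comm] using this
  have := hli _ hsum i
  simpa using this

/-- V LI: the maps A ↦ Vᵢ A Vⱼᴴ are jointly LI. -/
lemma li_conj_maps' {M : ℕ} {V : Fin M → Mat N} (hmin : LinearIndependent ℂ V)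
    (c : Fin M → Fin M → ℂ)
    (h : ∀ A : Mat N, ∑ i, ∑ j, c i j • (V i * A * (V j)ᴴ) = 0) :
    ∀ i j, c i j = 0 := by
  classical
  have hli := Fintype.linearIndependent_iff.mp hmin
  have key : ∀ (a p b q : Fin N),
      ∑ i, ∑ j, c i j * (V i p a * star (V j q b)) = 0 := by
    intro a p b q
    have h0 := congrFun (congrFun (h (Matrix.single a b 1)) p) q
    simpa [Matrix.sum_apply, Matrix.smul_apply, sandwich_conj_entry, smul_eq_mul] using h0
  have step1 : ∀ (q b : Fin N) (i : Fin M), ∑ j, c i j * star (V j q b) = 0 := by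
    intro q b
    have hsum : ∑ i, (∑ j, c i j * star (V j q b)) • V i = 0 := by
      ext p a
      simp only [Matrix.sum_apply, Matrix.smul_apply, smul_eq_mul, Matrix.zero_apply,
        Finset.sum_mul]
      have := key a p b q
      rw [← this]
      congr 1; funext i; congr 1; funext j; ring
    exact hli _ hsum
  intro i j
  have hsum : ∑ j, (star (c i j)) • V j = 0 := by
    ext q b
    simp only [Matrix.sum_apply, Matrix.smul_apply, smul_eq_mul, Matrix.zero_apply]
    have := congrArg star (step1 q b i)
    simpa [star_sum, mul_comm] using this
  have := hli _ hsum j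
  simpa using this

def kmsInner' (σ : Mat N) (hσ : σ.PosDef) (B A : Mat N) : ℂ :=
  (Bᴴ * mpow σ hσ (1/2) * A * mpow σ hσ (1/2)).trace

/-- The map `A ↦ ∑ T i j • Vᵢᴴ A Vⱼ` as a linear map. -/
def psiT {M : ℕ} (V : Fin M → Mat N) (T : Fin M → Fin M → ℂ) : Mat N →ₗ[ℂ] Mat N where
  toFun A := ∑ i, ∑ j, T i j • ((V i)ᴴ * A * V j)
  map_add' A B := by
    simp [Matrix.mul_add, Matrix.add_mul, smul_add, Finset.sum_add_distrib]
  map_smul' c A := by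
    simp only [RingHom.id_apply, Finset.smul_sum]
    congr 1; funext i; congr 1; funext j
    rw [Matrix.mul_smul, Matrix.smul_mul, smul_comm]

lemma psiT_apply {M : ℕ} (V : Fin M → Mat N) (T : Fin M → Fin M → ℂ) (A : Mat N) :
    psiT V T A = ∑ i, ∑ j, T i j • ((V i)ᴴ * A * V j) := rfl

variable {M : ℕ}

lemma intertwine (σ : Mat N) (hσ : σ.PosDef) (V : Fin M → Mat N)
    (hV : ∀ j, mpow σ hσ (-(1/2)) * V j * mpow σ hσ (1/2) = (V j)ᴴ) (j : Fin M) :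
    mpow σ hσ (1/2) * (V j)ᴴ = V j * mpow σ hσ (1/2) := by
  have h2 := congrArg (fun X => mpow σ hσ (1/2) * X) (hV j)
  rw [← h2, ← Matrix.mul_assoc, ← Matrix.mul_assoc, mpow_half_inv, one_mul]

lemma kms_trace_form (σ : Mat N) (hσ : σ.PosDef) (V : Fin M → Mat N)
    (hV : ∀ j, mpow σ hσ (-(1/2)) * V j * mpow σ hσ (1/2) = (V j)ᴴ)
    (T : Fin M → Fin M → ℂ) (A B : Mat N) :
    kmsInner' σ hσ B (psiT V T A) =
      ∑ i, ∑ j, T i j *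
        ((V j)ᴴ * Bᴴ * V i * mpow σ hσ (1/2) * A * mpow σ hσ (1/2)).trace := by
  have term : ∀ i j : Fin M,
      (Bᴴ * mpow σ hσ (1/2) * ((V i)ᴴ * A * V j) * mpow σ hσ (1/2)).trace
      = ((V j)ᴴ * Bᴴ * V i * mpow σ hσ (1/2) * A * mpow σ hσ (1/2)).trace := by
    intro i j
    have h1 : mpow σ hσ (1/2) * (V i)ᴴ = V i * mpow σ hσ (1/2) := intertwine σ hσ V hV i
    have h2 : mpow σ hσ (1/2) * (V j)ᴴ = V j * mpow σ hσ (1/2) := intertwine σ hσ V hV j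
    have e1 : Bᴴ * mpow σ hσ (1/2) * ((V i)ᴴ * A * V j) * mpow σ hσ (1/2)
        = (Bᴴ * V i * mpow σ hσ (1/2) * A * mpow σ hσ (1/2)) * (V j)ᴴ := by
      calc Bᴴ * mpow σ hσ (1/2) * ((V i)ᴴ * A * V j) * mpow σ hσ (1/2)
          = Bᴴ * ((mpow σ hσ (1/2) * (V i)ᴴ) * (A * (V j * mpow σ hσ (1/2)))) := by
            simp only [Matrix.mul_assoc]
        _ = Bᴴ * ((V i * mpow σ hσ (1/2)) * (A * (mpow σ hσ (1/2) * (V j)ᴴ))) := by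
            rw [h1, h2]
        _ = (Bᴴ * V i * mpow σ hσ (1/2) * A * mpow σ hσ (1/2)) * (V j)ᴴ := by
            simp only [Matrix.mul_assoc]
    rw [e1, Matrix.trace_mul_comm]
    simp only [Matrix.mul_assoc]
  unfold kmsInner'
  rw [psiT_apply]
  simp only [Matrix.mul_sum, Matrix.sum_mul, Matrix.mul_smul, Matrix.smul_mul,
    Matrix.trace_sum, Matrix.trace_smul, smul_eq_mul]
  exact Finset.sum_congr rfl fun i _ => Finset.sum_congr rfl fun j _ => by rw [term i j]

lemma kms_trace_form' (σ : Mat N) (hσ : σ.PosDef) (V : Fin M → Mat N)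
    (T : Fin M → Fin M → ℂ) (A B : Mat N) :
    kmsInner' σ hσ (psiT V T B) A =
      ∑ i, ∑ j, star (T i j) *
        ((V j)ᴴ * Bᴴ * V i * mpow σ hσ (1/2) * A * mpow σ hσ (1/2)).trace := by
  unfold kmsInner'
  rw [psiT_apply]
  have hconj : (∑ i, ∑ j, T i j • ((V i)ᴴ * B * V j))ᴴ
      = ∑ i, ∑ j, star (T i j) • ((V j)ᴴ * Bᴴ * V i) := by
    rw [Matrix.conjTranspose_sum]
    refine Finset.sum_congr rfl fun i _ => ?_
    rw [Matrix.conjTranspose_sum]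
    refine Finset.sum_congr rfl fun j _ => ?_
    rw [Matrix.conjTranspose_smul, Matrix.conjTranspose_mul, Matrix.conjTranspose_mul,
      Matrix.conjTranspose_conjTranspose]
    simp only [Matrix.mul_assoc]
  rw [hconj]
  simp only [Matrix.mul_sum, Matrix.sum_mul, Matrix.mul_smul, Matrix.smul_mul,
    Matrix.trace_sum, Matrix.trace_smul, smul_eq_mul]

/-- T real entries → psiT is KMS self-adjoint. -/
lemma psiT_kms_selfAdjoint (σ : Mat N) (hσ : σ.PosDef) (V : Fin M → Mat N)
    (hV : ∀ j, mpow σ hσ (-(1/2)) * V j * mpow σ hσ (1/2) = (V j)ᴴ)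
    (T : Fin M → Fin M → ℂ) (hT : ∀ i j, star (T i j) = T i j) :
    ∀ A B, kmsInner' σ hσ B (psiT V T A) = kmsInner' σ hσ (psiT V T B) A := by
  intro A B
  rw [kms_trace_form σ hσ V hV, kms_trace_form' σ hσ V]
  exact Finset.sum_congr rfl fun i _ => Finset.sum_congr rfl fun j _ => by rw [hT i j]

/-- KMS self-adjointness of psiT forces T to have real entries (when V is LI). -/
lemma psiT_kms_real (σ : Mat N) (hσ : σ.PosDef) (V : Fin M → Mat N)
    (hV : ∀ j, mpow σ hσ (-(1/2)) * V j * mpow σ hσ (1/2) = (V j)ᴴ)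
    (hmin : LinearIndependent ℂ V) (T : Fin M → Fin M → ℂ)
    (hsa : ∀ A B, kmsInner' σ hσ B (psiT V T A) = kmsInner' σ hσ (psiT V T B) A) :
    ∀ i j, star (T i j) = T i j := by
  classical
  set P := mpow σ hσ (1/2)
  set Q := mpow σ hσ (-(1/2))
  set d : Fin M → Fin M → ℂ := fun i j => T i j - star (T i j) with hd
  have key : ∀ A B : Mat N,
      ∑ i, ∑ j, d i j * ((V j)ᴴ * Bᴴ * V i * P * A * P).trace = 0 := by
    intro A B
    have h0 := hsa A B
    rw [kms_trace_form σ hσ V hV T A B, kms_trace_form' σ hσ V T A B] at h0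
    have : ∑ i, ∑ j, d i j * ((V j)ᴴ * Bᴴ * V i * P * A * P).trace
        = (∑ i, ∑ j, T i j * ((V j)ᴴ * Bᴴ * V i * P * A * P).trace)
          - ∑ i, ∑ j, star (T i j) * ((V j)ᴴ * Bᴴ * V i * P * A * P).trace := by
      rw [← Finset.sum_sub_distrib]
      refine Finset.sum_congr rfl fun i _ => ?_
      rw [← Finset.sum_sub_distrib]
      refine Finset.sum_congr rfl fun j _ => ?_
      rw [hd, sub_mul]
    rw [this, h0, sub_self]
  have collapse : ∀ (X D : Mat N), X * P * (Q * D * Q) * P = X * D := by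
    intro X D
    calc X * P * (Q * D * Q) * P = X * ((P * Q) * (D * (Q * P))) := by
          simp only [Matrix.mul_assoc]
      _ = X * D := by
          rw [mpow_half_inv, mpow_neg_half_inv, one_mul, mul_one]
  have key2 : ∀ D : Mat N, ∑ i, ∑ j, d i j • (V i * D * (V j)ᴴ) = 0 := by
    intro D
    apply trace_pairing_eq_zero
    intro C
    rw [Matrix.trace_mul_comm]
    have expand : ((∑ i, ∑ j, d i j • (V i * D * (V j)ᴴ)) * C).trace
        = ∑ i, ∑ j, d i j * ((V j)ᴴ * C * V i * D).trace := by
      simp only [Matrix.sum_mul, Matrix.smul_mul, Matrix.trace_sum, Matrix.trace_smul,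
        smul_eq_mul]
      refine Finset.sum_congr rfl fun i _ => Finset.sum_congr rfl fun j _ => ?_
      congr 1
      have e : V i * D * (V j)ᴴ * C = (V i * D) * ((V j)ᴴ * C) := by
        simp only [Matrix.mul_assoc]
      rw [e, Matrix.trace_mul_comm]
      simp only [Matrix.mul_assoc]
    rw [expand]
    have := key (Q * D * Q) Cᴴ
    simp only [Matrix.conjTranspose_conjTranspose] at this
    rw [← this]
    refine Finset.sum_congr rfl fun i _ => Finset.sum_congr rfl fun j _ => ?_
    congr 1
    rw [collapse ((V j)ᴴ * C * V i) D]
  have hz := li_conj_maps' hmin d key2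
  intro i j
  have := hz i j
  rw [hd] at this
  simp only at this
  linear_combination -this

lemma psd_one_add_smul {M : ℕ} (H : Matrix (Fin M) (Fin M) ℂ) (hherm : H.IsHermitian)
    (ε : ℝ) (hε : 0 ≤ ε) (hb : ε * (∑ i, ∑ j, ‖H i j‖) ≤ 1) :
    (1 + (ε : ℂ) • H).PosSemidef := by
  classical
  have hHentry : ∀ i j, (starRingEnd ℂ) (H i j) = H j i := by
    intro i j
    have := congrFun (congrFun hherm.eq j) i
    rw [Matrix.conjTranspose_apply] at this
    exact this
  refine Matrix.PosSemidef.of_dotProduct_mulVec_nonneg ?_ ?_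
  · unfold Matrix.IsHermitian
    rw [Matrix.conjTranspose_add, Matrix.conjTranspose_one, Matrix.conjTranspose_smul, hherm.eq]
    congr 1
    simp
  · intro x
    set S : ℝ := ∑ l, Complex.normSq (x l) with hS
    have hS0 : 0 ≤ S := Finset.sum_nonneg fun l _ => Complex.normSq_nonneg _
    have habs_le : ∀ i, ‖x i‖ ≤ Real.sqrt S := by
      intro i
      rw [Complex.norm_def]
      apply Real.sqrt_le_sqrt
      exact Finset.single_le_sum (fun l _ => Complex.normSq_nonneg (x l)) (Finset.mem_univ i)
    have hprod : ∀ i j, ‖x i‖ * ‖x j‖ ≤ S := by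
      intro i j
      calc ‖x i‖ * ‖x j‖
          ≤ Real.sqrt S * Real.sqrt S :=
            mul_le_mul (habs_le i) (habs_le j) (norm_nonneg _) (Real.sqrt_nonneg _)
        _ = S := Real.mul_self_sqrt hS0
    set z : ℂ := star x ⬝ᵥ (H *ᵥ x) with hz
    have hz_eq : z = ∑ i, ∑ j, star (x i) * H i j * x j := by
      simp [hz, dotProduct, Matrix.mulVec, Finset.mul_sum, mul_assoc]
    have hterm : ∀ i j, (starRingEnd ℂ) (star (x i) * H i j * x j)
        = star (x j) * H j i * x i := by
      intro i j
      simp only [_root_.map_mul]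
      rw [hHentry i j]
      have h1 : (starRingEnd ℂ) (star (x i)) = x i := by simp [RCLike.star_def]
      have h2 : (starRingEnd ℂ) (x j) = star (x j) := by simp [RCLike.star_def]
      rw [h1, h2]
      ring
    have hz_real : (starRingEnd ℂ) z = z := by
      calc (starRingEnd ℂ) z = ∑ i, ∑ j, star (x j) * H j i * x i := by
            rw [hz_eq, map_sum]
            refine Finset.sum_congr rfl fun i _ => ?_
            rw [map_sum]
            exact Finset.sum_congr rfl fun j _ => hterm i j
        _ = z := by rw [hz_eq]; exact Finset.sum_comm
    have hz_im : z.im = 0 := by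
      have := congrArg Complex.im hz_real
      simp only [Complex.conj_im] at this
      linarith
    have hz_bound : |z.re| ≤ (∑ i, ∑ j, ‖H i j‖) * S := by
      have h1 : |z.re| ≤ ‖z‖ := Complex.abs_re_le_norm z
      have h2 : ‖z‖ ≤ ∑ i, ∑ j, ‖x i‖ * ‖H i j‖
          * ‖x j‖ := by
        rw [hz_eq]
        refine (norm_sum_le _ _).trans ?_
        refine Finset.sum_le_sum fun i _ => ?_
        refine (norm_sum_le _ _).trans ?_
        refine Finset.sum_le_sum fun j _ => ?_
        simp only [norm_mul]
        have : ‖star (x i)‖ = ‖x i‖ := by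
          simp [RCLike.star_def]
        rw [this]
      have h3 : ∑ i, ∑ j, ‖x i‖ * ‖H i j‖ * ‖x j‖
          ≤ ∑ i, ∑ j, ‖H i j‖ * S := by
        refine Finset.sum_le_sum fun i _ => Finset.sum_le_sum fun j _ => ?_
        have he : ‖x i‖ * ‖H i j‖ * ‖x j‖
            = ‖H i j‖ * (‖x i‖ * ‖x j‖) := by ring
        rw [he]
        exact mul_le_mul_of_nonneg_left (hprod i j) (norm_nonneg _)
      calc |z.re| ≤ ‖z‖ := h1
        _ ≤ _ := h2
        _ ≤ ∑ i, ∑ j, ‖H i j‖ * S := h3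
        _ = (∑ i, ∑ j, ‖H i j‖) * S := by
            rw [Finset.sum_mul]
            exact Finset.sum_congr rfl fun i _ => by rw [Finset.sum_mul]
    have hdot : star x ⬝ᵥ ((1 + (ε : ℂ) • H) *ᵥ x) = (S : ℂ) + (ε : ℂ) * z := by
      have hmv : (1 + (ε : ℂ) • H) *ᵥ x = x + (ε : ℂ) • (H *ᵥ x) := by
        rw [Matrix.add_mulVec, Matrix.one_mulVec, Matrix.smul_mulVec]
      rw [hmv, dotProduct_add, dotProduct_smul, smul_eq_mul]
      congr 1
      rw [hS]
      push_cast
      refine Finset.sum_congr rfl fun l _ => ?_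
      simp [Pi.star_apply, RCLike.star_def, ← Complex.normSq_eq_conj_mul_self]
    rw [hdot, Complex.le_def]
    constructor
    · simp only [Complex.add_re, Complex.ofReal_re, Complex.mul_re, Complex.ofReal_im,
        Complex.zero_re, hz_im, mul_zero, zero_mul, sub_zero]
      have h4 : ε * |z.re| ≤ S := by
        have hHsum0 : 0 ≤ ∑ i, ∑ j, ‖H i j‖ :=
          Finset.sum_nonneg fun i _ => Finset.sum_nonneg fun j _ => norm_nonneg _
        calc ε * |z.re| ≤ ε * ((∑ i, ∑ j, ‖H i j‖) * S) :=
              mul_le_mul_of_nonneg_left hz_bound hε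
          _ = (ε * (∑ i, ∑ j, ‖H i j‖)) * S := by ring
          _ ≤ 1 * S := mul_le_mul_of_nonneg_right hb hS0
          _ = S := one_mul S
      have h5 : ε * -|z.re| ≤ ε * z.re := mul_le_mul_of_nonneg_left (neg_abs_le z.re) hε
      have h6 : ε * -|z.re| = -(ε * |z.re|) := by ring
      linarith
    · simp [hz_im]

open scoped MatrixOrder in
lemma psiT_kraus {M : ℕ} (V : Fin M → Mat N) (T : Matrix (Fin M) (Fin M) ℂ)
    (hT : T.PosSemidef) :
    ∃ (K : ℕ) (W : Fin K → Mat N),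
      ∀ A, psiT V (fun i j => T i j) A = ∑ k, (W k)ᴴ * A * W k := by
  classical
  set S := CFC.sqrt T with hSdef
  refine ⟨M, fun k => ∑ j, S k j • V j, fun A => ?_⟩
  have hSherm : Sᴴ = S := (CFC.sqrt_nonneg T).posSemidef.1
  have hSS : S * S = T := CFC.sqrt_mul_sqrt_self T hT.nonneg
  have expand : ∀ k, (∑ i, S k i • V i)ᴴ * A * (∑ j, S k j • V j)
      = ∑ i, ∑ j, (star (S k i) * S k j) • ((V i)ᴴ * A * V j) := by
    intro k
    rw [Matrix.conjTranspose_sum]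
    simp only [Matrix.conjTranspose_smul, Matrix.sum_mul, Matrix.mul_sum, Matrix.smul_mul,
      Matrix.mul_smul, smul_smul]
    simp only [Finset.smul_sum, smul_smul]
    rw [Finset.sum_comm]
    exact Finset.sum_congr rfl fun i _ => Finset.sum_congr rfl fun j _ => by rw [mul_comm]
  rw [psiT_apply]
  calc ∑ i, ∑ j, T i j • ((V i)ᴴ * A * V j)
      = ∑ i, ∑ j, ∑ k, (star (S k i) * S k j) • ((V i)ᴴ * A * V j) := by
        refine Finset.sum_congr rfl fun i _ => Finset.sum_congr rfl fun j _ => ?_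
        rw [← Finset.sum_smul]
        congr 1
        have hTij : T i j = (S * S) i j := by rw [hSS]
        rw [hTij, Matrix.mul_apply]
        refine Finset.sum_congr rfl fun k _ => ?_
        congr 1
        conv_lhs => rw [← hSherm]
        rw [Matrix.conjTranspose_apply]
    _ = ∑ i, ∑ k, ∑ j, (star (S k i) * S k j) • ((V i)ᴴ * A * V j) :=
        Finset.sum_congr rfl fun i _ => Finset.sum_comm
    _ = ∑ k, ∑ i, ∑ j, (star (S k i) * S k j) • ((V i)ᴴ * A * V j) := Finset.sum_comm
    _ = ∑ k, (∑ i, S k i • V i)ᴴ * A * (∑ j, S k j • V j) := by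
        exact Finset.sum_congr rfl fun k _ => (expand k).symm

lemma sym_regroup {M : ℕ} {α : Type*} [AddCommGroup α] [Module ℂ α]
    (D : Fin M → Fin M → ℂ) (hsymm : ∀ i j, D j i = D i j) (X : Fin M → Fin M → α) :
    ∑ i, ∑ j, D i j • X i j
      = ∑ p : {p : Fin M × Fin M // p.1 ≤ p.2},
          (if p.1.1 = p.1.2 then (2:ℂ)⁻¹ * D p.1.1 p.1.2 else D p.1.1 p.1.2) •
            (X p.1.1 p.1.2 + X p.1.2 p.1.1) := by
  classical
  set G : Fin M × Fin M → α := fun p => D p.1 p.2 • (X p.1 p.2 + X p.2 p.1) with hG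
  set f : Fin M × Fin M → α := fun p =>
    (if p.1 = p.2 then (2:ℂ)⁻¹ * D p.1 p.2 else D p.1 p.2) • (X p.1 p.2 + X p.2 p.1) with hf
  have hGswap : ∀ p : Fin M × Fin M, G (p.2, p.1) = G p := by
    intro p
    simp only [hG, hsymm, add_comm]
  set slt := Finset.univ.filter (fun p : Fin M × Fin M => p.1 < p.2) with hslt
  set seq := Finset.univ.filter (fun p : Fin M × Fin M => p.1 = p.2) with hseq
  set sle := Finset.univ.filter (fun p : Fin M × Fin M => p.1 ≤ p.2) with hsle
  have split : ∀ g : Fin M × Fin M → α, ∑ p ∈ sle, g p = ∑ p ∈ slt, g p + ∑ p ∈ seq, g p := by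
    intro g
    rw [← Finset.sum_filter_add_sum_filter_not sle (fun p : Fin M × Fin M => p.1 = p.2) g,
      add_comm]
    congr 1
    · congr 1
      rw [hsle, hslt, Finset.filter_filter]
      apply Finset.filter_congr
      intro p _
      constructor
      · rintro ⟨h1, h2⟩; exact lt_of_le_of_ne h1 h2
      · intro h; exact ⟨le_of_lt h, ne_of_lt h⟩
    · congr 1
      rw [hsle, hseq, Finset.filter_filter]
      apply Finset.filter_congr
      intro p _
      constructor
      · rintro ⟨_, h2⟩; exact h2
      · intro h; exact ⟨le_of_eq h, h⟩
  have huniv : ∑ p : Fin M × Fin M, G p = ∑ p ∈ sle, G p + ∑ p ∈ slt, G p := by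
    rw [← Finset.sum_filter_add_sum_filter_not Finset.univ (fun p : Fin M × Fin M => p.1 ≤ p.2) G]
    congr 1
    refine Finset.sum_nbij' (fun p => (p.2, p.1)) (fun p => (p.2, p.1)) ?_ ?_ ?_ ?_ ?_
    · intro p hp
      simp only [hslt, Finset.mem_filter, Finset.mem_univ, true_and, not_le] at hp ⊢
      exact hp
    · intro p hp
      simp only [hslt, Finset.mem_filter, Finset.mem_univ, true_and, not_le] at hp ⊢
      exact hp
    · intro p _; rfl
    · intro p _; rfl
    · intro p _
      exact (hGswap p).symm
  have hlhs : (2:ℂ) • ∑ i, ∑ j, D i j • X i j = ∑ p : Fin M × Fin M, G p := by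
    rw [Fintype.sum_prod_type]
    have hGij : ∀ i j, G (i, j) = D i j • X i j + D i j • X j i := by
      intro i j; simp only [hG, smul_add]
    simp only [hGij, Finset.sum_add_distrib]
    have hsw : ∑ i, ∑ j, D i j • X j i = ∑ i, ∑ j, D i j • X i j := by
      rw [Finset.sum_comm]
      exact Finset.sum_congr rfl fun i _ => Finset.sum_congr rfl fun j _ => by rw [hsymm]
    rw [hsw, two_smul]
  have hrhs : ∑ p : {p : Fin M × Fin M // p.1 ≤ p.2},
      (if p.1.1 = p.1.2 then (2:ℂ)⁻¹ * D p.1.1 p.1.2 else D p.1.1 p.1.2) •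
        (X p.1.1 p.1.2 + X p.1.2 p.1.1)
      = ∑ p ∈ sle, f p :=
    (Finset.sum_subtype sle (by intro p; simp [hsle]) f).symm
  have hf_lt : ∀ p ∈ slt, f p = G p := by
    intro p hp
    rw [hslt, Finset.mem_filter] at hp
    simp only [hf, hG, if_neg (ne_of_lt hp.2)]
  have hf_eq : ∀ p ∈ seq, f p = (2:ℂ)⁻¹ • G p := by
    intro p hp
    rw [hseq, Finset.mem_filter] at hp
    simp only [hf, hG, if_pos hp.2]
    exact (smul_smul _ _ _).symm
  rw [hrhs, split f, Finset.sum_congr rfl hf_lt, Finset.sum_congr rfl hf_eq,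
    ← Finset.smul_sum]
  have h2 : ∑ i, ∑ j, D i j • X i j = (2:ℂ)⁻¹ • ∑ p : Fin M × Fin M, G p := by
    rw [← hlhs, smul_smul]
    norm_num
  rw [h2, huniv, split G, smul_add, smul_add]
  calc (2:ℂ)⁻¹ • ∑ p ∈ slt, G p + (2:ℂ)⁻¹ • ∑ p ∈ seq, G p + (2:ℂ)⁻¹ • ∑ p ∈ slt, G p
      = ((2:ℂ)⁻¹ • ∑ p ∈ slt, G p + (2:ℂ)⁻¹ • ∑ p ∈ slt, G p)
        + (2:ℂ)⁻¹ • ∑ p ∈ seq, G p := by abel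
    _ = ∑ p ∈ slt, G p + (2:ℂ)⁻¹ • ∑ p ∈ seq, G p := by
        rw [← add_smul]
        norm_num

lemma kraus_gram {M K : ℕ} (V : Fin M → Mat N) (X : Fin K → Mat N)
    (h : ∀ A : Mat N, ∑ j, (V j)ᴴ * A * V j = ∑ k, (X k)ᴴ * A * (X k))
    (a p b q : Fin N) :
    ∑ j, star (V j a p) * V j b q = ∑ k, star (X k a p) * X k b q := by
  have h0 := congrFun (congrFun (h (Matrix.single a b 1)) p) q
  rw [Matrix.sum_apply, Matrix.sum_apply] at h0
  simpa only [conj_sandwich_entry] using h0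

/-- quadratic-form identity for families with identical Gram data -/
lemma gram_quad {Q : ℕ} (Y : Fin Q → Mat N) (z : (Fin N × Fin N) → ℂ) :
    ∑ t, ((∑ r : Fin N × Fin N, star (Y t r.1 r.2) * z r) *
        star (∑ s : Fin N × Fin N, star (Y t s.1 s.2) * z s))
      = ∑ r : Fin N × Fin N, ∑ s : Fin N × Fin N,
          z r * star (z s) * ∑ t, star (Y t r.1 r.2) * Y t s.1 s.2 := by
  classical
  have hterm : ∀ t, (∑ r : Fin N × Fin N, star (Y t r.1 r.2) * z r) *
      star (∑ s : Fin N × Fin N, star (Y t s.1 s.2) * z s)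
      = ∑ r : Fin N × Fin N, ∑ s : Fin N × Fin N,
          z r * star (z s) * (star (Y t r.1 r.2) * Y t s.1 s.2) := by
    intro t
    rw [star_sum, Finset.sum_mul]
    refine Finset.sum_congr rfl fun r _ => ?_
    rw [Finset.mul_sum]
    refine Finset.sum_congr rfl fun s _ => ?_
    have hst : star (star (Y t s.1 s.2) * z s) = star (z s) * Y t s.1 s.2 := by
      rw [star_mul', star_star, mul_comm]
    rw [hst]
    have hst2 : star (Y t r.1 r.2) * z r * (star (z s) * Y t s.1 s.2)
        = z r * star (z s) * (star (Y t r.1 r.2) * Y t s.1 s.2) := by ring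
    exact hst2
  simp only [hterm]
  rw [Finset.sum_comm]
  refine Finset.sum_congr rfl fun r _ => ?_
  rw [Finset.sum_comm]
  refine Finset.sum_congr rfl fun s _ => ?_
  rw [Finset.mul_sum]

lemma kraus_span {M K : ℕ} (V : Fin M → Mat N) (X : Fin K → Mat N)
    (h : ∀ A : Mat N, ∑ j, (V j)ᴴ * A * V j = ∑ k, (X k)ᴴ * A * (X k)) (k₀ : Fin K) :
    ∃ u : Fin M → ℂ, X k₀ = ∑ j, u j • V j := by
  classical
  set E := EuclideanSpace ℂ (Fin N × Fin N) with hE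
  set L : E ≃ₗ[ℂ] ((Fin N × Fin N) → ℂ) := WithLp.linearEquiv 2 ℂ _ with hL
  set w : Fin M → E := fun j => L.symm (fun r : Fin N × Fin N => V j r.1 r.2) with hw
  set x : Fin K → E := fun k => L.symm (fun r : Fin N × Fin N => X k r.1 r.2) with hx
  have hinner_w : ∀ (j : Fin M) (z : E),
      (inner ℂ (w j) z : ℂ) = ∑ r : Fin N × Fin N, star (V j r.1 r.2) * (L z) r := by
    intro j z
    rw [PiLp.inner_apply]
    refine Finset.sum_congr rfl fun r _ => ?_
    simp [hw, hL, RCLike.inner_apply', RCLike.star_def, WithLp.linearEquiv,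
      WithLp.linearEquiv_symm_apply, WithLp.linearEquiv_apply, mul_comm]
  have hinner_x : ∀ (k : Fin K) (z : E),
      (inner ℂ (x k) z : ℂ) = ∑ r : Fin N × Fin N, star (X k r.1 r.2) * (L z) r := by
    intro k z
    rw [PiLp.inner_apply]
    refine Finset.sum_congr rfl fun r _ => ?_
    simp [hx, hL, RCLike.inner_apply', RCLike.star_def, WithLp.linearEquiv,
      WithLp.linearEquiv_symm_apply, WithLp.linearEquiv_apply, mul_comm]
  have quad : ∀ z : E, ∑ k, (inner ℂ (x k) z : ℂ) * star (inner ℂ (x k) z : ℂ)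
      = ∑ j, (inner ℂ (w j) z : ℂ) * star (inner ℂ (w j) z : ℂ) := by
    intro z
    simp only [hinner_w, hinner_x]
    rw [gram_quad X (L z), gram_quad V (L z)]
    refine Finset.sum_congr rfl fun r _ => Finset.sum_congr rfl fun s _ => ?_
    rw [kraus_gram V X h r.1 r.2 s.1 s.2]
  have hmem : x k₀ ∈ (Submodule.span ℂ (Set.range w))ᗮᗮ := by
    rw [Submodule.mem_orthogonal]
    intro z hz
    rw [Submodule.mem_orthogonal] at hz
    have hwz : ∀ j, (inner ℂ (w j) z : ℂ) = 0 := fun j =>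
      hz (w j) (Submodule.subset_span (Set.mem_range_self j))
    have hzero : ∑ k, (inner ℂ (x k) z : ℂ) * star (inner ℂ (x k) z : ℂ) = 0 := by
      rw [quad z]
      simp [hwz]
    have hns : ∑ k, Complex.normSq (inner ℂ (x k) z : ℂ) = 0 := by
      have : ∑ k, ((Complex.normSq (inner ℂ (x k) z : ℂ) : ℝ) : ℂ) = 0 := by
        rw [← hzero]
        refine Finset.sum_congr rfl fun k _ => ?_
        rw [RCLike.star_def, Complex.mul_conj]
      exact_mod_cast this
    have hxz : (inner ℂ (x k₀) z : ℂ) = 0 := by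
      have h1 := (Finset.sum_eq_zero_iff_of_nonneg
        (fun k _ => Complex.normSq_nonneg (inner ℂ (x k) z : ℂ))).mp hns k₀ (Finset.mem_univ k₀)
      exact Complex.normSq_eq_zero.mp h1
    rw [← inner_conj_symm]
    rw [hxz]
    simp
  rw [Submodule.orthogonal_orthogonal] at hmem
  obtain ⟨u, hu⟩ := (Submodule.mem_span_range_iff_exists_fun ℂ).mp hmem
  refine ⟨u, ?_⟩
  have hfun : (fun r : Fin N × Fin N => X k₀ r.1 r.2)
      = ∑ j, u j • (fun r : Fin N × Fin N => V j r.1 r.2) := by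
    have hthis := congrArg L hu
    rw [map_sum] at hthis
    simp only [_root_.map_smul, hw, hx, L.apply_symm_apply] at hthis
    exact hthis.symm
  ext a b
  have h3 := congrFun hfun (a, b)
  simp only [Finset.sum_apply, Pi.smul_apply, smul_eq_mul] at h3
  rw [Matrix.sum_apply]
  simpa [Matrix.smul_apply, smul_eq_mul] using h3

lemma sandwich_expand {M : ℕ} (V : Fin M → Mat N) (c : Fin M → ℂ) (A : Mat N) :
    (∑ j, c j • V j)ᴴ * A * (∑ j, c j • V j)
      = ∑ i, ∑ j, (star (c i) * c j) • ((V i)ᴴ * A * V j) := by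
  rw [Matrix.conjTranspose_sum]
  simp only [Matrix.conjTranspose_smul, Matrix.sum_mul, Matrix.mul_sum, Matrix.smul_mul,
    Matrix.mul_smul, smul_smul]
  simp only [Finset.smul_sum, smul_smul]
  rw [Finset.sum_comm]
  exact Finset.sum_congr rfl fun i _ => Finset.sum_congr rfl fun j _ => by rw [mul_comm]

lemma diag_sum {M : ℕ} (X : Fin M → Fin M → Mat N) :
    ∑ i, ∑ j, (if i = j then (1:ℂ) else 0) • X i j = ∑ i, X i i := by
  refine Finset.sum_congr rfl fun i _ => ?_
  have : ∀ j, (if i = j then (1:ℂ) else 0) • X i j = if i = j then X i j else 0 := by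
    intro j
    split <;> simp
  simp only [this]
  rw [Finset.sum_ite_eq]
  simp

lemma real_entry_of_star_eq {z : ℂ} (h : star z = z) : z = ((z.re : ℝ) : ℂ) := by
  have him : z.im = 0 := by
    have := congrArg Complex.im h
    simp only [Complex.star_def, Complex.conj_im] at this
    linarith
  apply Complex.ext <;> simp [him]

lemma kmsInner_eq (σ : Mat N) (hσ : σ.PosDef) : kmsInner σ hσ = kmsInner' σ hσ := rfl

lemma forward_dir (σ : Mat N) (hσ : σ.PosDef) (Φ : Mat N →ₗ[ℂ] Mat N) (hΦu : Φ 1 = 1)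
    {M : ℕ} (V : Fin M → Mat N) (hmin : LinearIndependent ℂ V)
    (hV : ∀ j, mpow σ hσ (-(1/2)) * V j * mpow σ hσ (1/2) = (V j)ᴴ)
    (hrep : ∀ A, Φ A = ∑ j, (V j)ᴴ * A * V j)
    (hext : ∀ Ψ₁ Ψ₂ : Mat N →ₗ[ℂ] Mat N,
        IsCP Ψ₁ → IsKMSSelfAdjoint σ hσ Ψ₁ → Ψ₁ 1 = 1 →
        IsCP Ψ₂ → IsKMSSelfAdjoint σ hσ Ψ₂ → Ψ₂ 1 = 1 →
        ∀ t : ℝ, 0 < t → t < 1 →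
          Φ = (t : ℂ) • Ψ₁ + ((1 - t : ℝ) : ℂ) • Ψ₂ → Ψ₁ = Φ ∧ Ψ₂ = Φ) :
    LinearIndependent ℝ
      (fun p : {p : Fin M × Fin M // p.1 ≤ p.2} =>
        (V p.1.1)ᴴ * V p.1.2 + (V p.1.2)ᴴ * V p.1.1) := by
  classical
  by_contra hLI
  obtain ⟨g, hgsum, p₀, hg0⟩ := Fintype.not_linearIndependent_iff.mp hLI
  -- the real symmetric coefficient matrix
  set Hr : Fin M → Fin M → ℝ := fun i j =>
    if h : i ≤ j then (if i = j then 2 * g ⟨(i,j), h⟩ else g ⟨(i,j), h⟩)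
    else g ⟨(j,i), (not_le.mp h).le⟩ with hHr
  have hHsymm : ∀ i j, Hr j i = Hr i j := by
    intro i j
    rcases lt_trichotomy i j with hlt | heq | hgt
    · rw [hHr]
      simp only [dif_pos hlt.le, dif_neg (not_le.mpr hlt), if_neg hlt.ne]
    · subst heq; rfl
    · rw [hHr]
      simp only [dif_pos hgt.le, dif_neg (not_le.mpr hgt), if_neg hgt.ne]
  set D : Fin M → Fin M → ℂ := fun i j => ((Hr i j : ℝ) : ℂ) with hD
  have hDsymm : ∀ i j, D j i = D i j := by
    intro i j; rw [hD]; simp only [hHsymm]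
  have hDstar : ∀ i j, star (D i j) = D i j := by
    intro i j; rw [hD]; exact Complex.conj_ofReal _
  -- coefficient identification
  have hcoef : ∀ p : {p : Fin M × Fin M // p.1 ≤ p.2},
      (if p.1.1 = p.1.2 then (2:ℂ)⁻¹ * D p.1.1 p.1.2 else D p.1.1 p.1.2)
        = ((g p : ℝ) : ℂ) := by
    intro p
    obtain ⟨⟨i, j⟩, hij⟩ := p
    by_cases hd : i = j
    · subst hd
      simp only [if_pos rfl, hD, hHr, dif_pos (le_refl i)]
      push_cast
      ring
    · simp only [if_neg hd, hD, hHr, dif_pos hij, if_neg hd]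
  -- ∑ D i j • Vᵢᴴ Vⱼ = 0
  have keyzero : ∑ i, ∑ j, D i j • ((V i)ᴴ * V j) = 0 := by
    rw [sym_regroup D hDsymm (fun i j => (V i)ᴴ * V j)]
    calc ∑ p : {p : Fin M × Fin M // p.1 ≤ p.2},
        (if p.1.1 = p.1.2 then (2:ℂ)⁻¹ * D p.1.1 p.1.2 else D p.1.1 p.1.2) •
          ((V p.1.1)ᴴ * V p.1.2 + (V p.1.2)ᴴ * V p.1.1)
        = ∑ p : {p : Fin M × Fin M // p.1 ≤ p.2},
            g p • ((V p.1.1)ᴴ * V p.1.2 + (V p.1.2)ᴴ * V p.1.1) := by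
          refine Finset.sum_congr rfl fun p _ => ?_
          rw [hcoef p, ← Complex.coe_algebraMap, algebraMap_smul]
      _ = 0 := hgsum
  -- the perturbation size
  set absSum : ℝ := ∑ i, ∑ j, ‖D i j‖ with habsSum
  have habs0 : 0 ≤ absSum :=
    Finset.sum_nonneg fun i _ => Finset.sum_nonneg fun j _ => norm_nonneg _
  set ε : ℝ := (1 + absSum)⁻¹ with hε
  have hεpos : 0 < ε := by
    rw [hε]; positivity
  have hεbound : ε * absSum ≤ 1 := by
    have h1 : ε * absSum ≤ ε * (1 + absSum) :=
      mul_le_mul_of_nonneg_left (by linarith) hεpos.le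
    have h2 : ε * (1 + absSum) = 1 := by
      rw [hε]; field_simp
    linarith
  set Hm : Matrix (Fin M) (Fin M) ℂ := Matrix.of D with hHm
  have hherm : Hm.IsHermitian := by
    unfold Matrix.IsHermitian
    ext i j
    rw [Matrix.conjTranspose_apply]
    show star (Hm j i) = Hm i j
    rw [hHm]
    show star (D j i) = D i j
    rw [hDsymm i j]
    exact hDstar i j
  have hhermneg : (-Hm).IsHermitian := hherm.neg
  have habs_eq : ∀ i j : Fin M, ‖(-Hm) i j‖ = ‖Hm i j‖ := by
    intro i j
    rw [Matrix.neg_apply, norm_neg]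
  -- the two PSD coefficient matrices
  have hpsdP : (1 + (ε : ℂ) • Hm).PosSemidef := by
    apply psd_one_add_smul Hm hherm ε hεpos.le
    exact hεbound
  have hpsdM : (1 + (ε : ℂ) • (-Hm)).PosSemidef := by
    apply psd_one_add_smul (-Hm) hhermneg ε hεpos.le
    calc ε * (∑ i, ∑ j, ‖(-Hm) i j‖)
        = ε * absSum := by
          rw [habsSum]
          congr 1
          exact Finset.sum_congr rfl fun i _ => Finset.sum_congr rfl fun j _ => habs_eq i j
      _ ≤ 1 := hεbound
  set Tp : Fin M → Fin M → ℂ := fun i j => (1 + (ε : ℂ) • Hm) i j with hTp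
  set Tm : Fin M → Fin M → ℂ := fun i j => (1 + (ε : ℂ) • (-Hm)) i j with hTm
  have hTp_eq : ∀ i j, Tp i j = (if i = j then (1:ℂ) else 0) + (ε : ℂ) * D i j := by
    intro i j
    rw [hTp]
    show (1 + (ε : ℂ) • Hm) i j = _
    rw [Matrix.add_apply, Matrix.smul_apply, Matrix.one_apply]
    rfl
  have hTm_eq : ∀ i j, Tm i j = (if i = j then (1:ℂ) else 0) - (ε : ℂ) * D i j := by
    intro i j
    rw [hTm]
    show (1 + (ε : ℂ) • (-Hm)) i j = _
    rw [Matrix.add_apply, Matrix.smul_apply, Matrix.one_apply, Matrix.neg_apply]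
    show _ + (ε:ℂ) * (-(D i j)) = _
    ring
  have hTp_real : ∀ i j, star (Tp i j) = Tp i j := by
    intro i j
    rw [hTp_eq]
    rw [star_add, star_mul']
    congr 1
    · split <;> simp
    · rw [hDstar]
      congr 1
      exact Complex.conj_ofReal _
  have hTm_real : ∀ i j, star (Tm i j) = Tm i j := by
    intro i j
    rw [hTm_eq]
    rw [star_sub, star_mul']
    congr 1
    · split <;> simp
    · rw [hDstar]
      congr 1
      exact Complex.conj_ofReal _
  -- the two perturbed maps
  set Ψp := psiT V Tp with hΨp
  set Ψm := psiT V Tm with hΨm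
  have hΦdiag : ∀ A, Φ A = ∑ i, ∑ j, (if i = j then (1:ℂ) else 0) • ((V i)ᴴ * A * V j) := by
    intro A
    rw [hrep A]
    exact (_root_.diag_sum (fun i j => (V i)ᴴ * A * V j)).symm
  have hVV1 : ∑ i, ∑ j, (if i = j then (1:ℂ) else 0) • ((V i)ᴴ * V j) = 1 := by
    have h1 : ∑ i, ∑ j, (if i = j then (1:ℂ) else 0) • ((V i)ᴴ * 1 * V j) = 1 :=
      (hΦdiag 1).symm.trans hΦu
    have h2 : ∑ i, ∑ j, (if i = j then (1:ℂ) else 0) • ((V i)ᴴ * V j)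
        = ∑ i, ∑ j, (if i = j then (1:ℂ) else 0) • ((V i)ᴴ * 1 * V j) :=
      Finset.sum_congr rfl fun i _ => Finset.sum_congr rfl fun j _ => by
        rw [Matrix.mul_one]
    rw [h2, h1]
  have hcpP : IsCP Ψp := by
    obtain ⟨K, Wk, hWk⟩ := psiT_kraus V (1 + (ε : ℂ) • Hm) hpsdP
    exact ⟨K, Wk, fun A => hWk A⟩
  have hcpM : IsCP Ψm := by
    obtain ⟨K, Wk, hWk⟩ := psiT_kraus V (1 + (ε : ℂ) • (-Hm)) hpsdM
    exact ⟨K, Wk, fun A => hWk A⟩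
  have hsaP : IsKMSSelfAdjoint σ hσ Ψp := fun A B =>
    psiT_kms_selfAdjoint σ hσ V hV Tp hTp_real A B
  have hsaM : IsKMSSelfAdjoint σ hσ Ψm := fun A B =>
    psiT_kms_selfAdjoint σ hσ V hV Tm hTm_real A B
  have split_smul : ∀ (c : Fin M → Fin M → ℂ) (Y : Fin M → Fin M → Mat N),
      True := fun _ _ => trivial
  have huP : Ψp 1 = 1 := by
    rw [hΨp, psiT_apply]
    calc ∑ i, ∑ j, Tp i j • ((V i)ᴴ * 1 * V j)
        = ∑ i, ∑ j, ((if i = j then (1:ℂ) else 0) • ((V i)ᴴ * V j)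
            + (ε : ℂ) • (D i j • ((V i)ᴴ * V j))) := by
          refine Finset.sum_congr rfl fun i _ => Finset.sum_congr rfl fun j _ => ?_
          rw [Matrix.mul_one, hTp_eq, add_smul, mul_smul]
      _ = (∑ i, ∑ j, (if i = j then (1:ℂ) else 0) • ((V i)ᴴ * V j))
            + (ε : ℂ) • (∑ i, ∑ j, D i j • ((V i)ᴴ * V j)) := by
          rw [Finset.smul_sum]
          rw [← Finset.sum_add_distrib]
          refine Finset.sum_congr rfl fun i _ => ?_
          rw [Finset.smul_sum, ← Finset.sum_add_distrib]
      _ = 1 := by rw [hVV1, keyzero, smul_zero, add_zero]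
  have huM : Ψm 1 = 1 := by
    rw [hΨm, psiT_apply]
    calc ∑ i, ∑ j, Tm i j • ((V i)ᴴ * 1 * V j)
        = ∑ i, ∑ j, ((if i = j then (1:ℂ) else 0) • ((V i)ᴴ * V j)
            - (ε : ℂ) • (D i j • ((V i)ᴴ * V j))) := by
          refine Finset.sum_congr rfl fun i _ => Finset.sum_congr rfl fun j _ => ?_
          rw [Matrix.mul_one, hTm_eq, sub_smul, mul_smul]
      _ = (∑ i, ∑ j, (if i = j then (1:ℂ) else 0) • ((V i)ᴴ * V j))
            - (ε : ℂ) • (∑ i, ∑ j, D i j • ((V i)ᴴ * V j)) := by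
          rw [Finset.smul_sum]
          rw [← Finset.sum_sub_distrib]
          refine Finset.sum_congr rfl fun i _ => ?_
          rw [Finset.smul_sum, ← Finset.sum_sub_distrib]
      _ = 1 := by rw [hVV1, keyzero, smul_zero, sub_zero]
  -- convex combination
  have hconv : Φ = (((1:ℝ)/2 : ℝ) : ℂ) • Ψp + ((1 - (1:ℝ)/2 : ℝ) : ℂ) • Ψm := by
    apply LinearMap.ext
    intro A
    rw [LinearMap.add_apply, LinearMap.smul_apply, LinearMap.smul_apply]
    have hhalf : ((1 - (1:ℝ)/2 : ℝ) : ℂ) = (((1:ℝ)/2 : ℝ) : ℂ) := by norm_num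
    rw [hhalf, ← smul_add]
    have hsum : Ψp A + Ψm A = (2:ℂ) • Φ A := by
      rw [hΨp, hΨm, psiT_apply, psiT_apply, ← Finset.sum_add_distrib]
      rw [hΦdiag A, Finset.smul_sum]
      refine Finset.sum_congr rfl fun i _ => ?_
      rw [← Finset.sum_add_distrib, Finset.smul_sum]
      refine Finset.sum_congr rfl fun j _ => ?_
      rw [← add_smul, hTp_eq, hTm_eq, smul_smul]
      congr 1
      ring
    rw [hsum, smul_smul]
    have : (((1:ℝ)/2 : ℝ) : ℂ) * 2 = 1 := by norm_num
    rw [this, one_smul]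
  obtain ⟨hPeq, _⟩ := hext Ψp Ψm hcpP hsaP huP hcpM hsaM huM ((1:ℝ)/2)
    (by norm_num) (by norm_num) hconv
  -- conclude ε D = 0
  have hzero : ∀ A : Mat N, ∑ i, ∑ j, ((ε:ℂ) * D i j) • ((V i)ᴴ * A * V j) = 0 := by
    intro A
    have h1 : Ψp A = Φ A := by rw [hPeq]
    rw [hΨp, psiT_apply, hΦdiag A] at h1
    calc ∑ i, ∑ j, ((ε:ℂ) * D i j) • ((V i)ᴴ * A * V j)
        = ∑ i, ∑ j, (Tp i j • ((V i)ᴴ * A * V j)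
            - (if i = j then (1:ℂ) else 0) • ((V i)ᴴ * A * V j)) := by
          refine Finset.sum_congr rfl fun i _ => Finset.sum_congr rfl fun j _ => ?_
          rw [← sub_smul, hTp_eq]
          congr 1
          ring
      _ = (∑ i, ∑ j, Tp i j • ((V i)ᴴ * A * V j))
            - ∑ i, ∑ j, (if i = j then (1:ℂ) else 0) • ((V i)ᴴ * A * V j) := by
          rw [← Finset.sum_sub_distrib]
          exact Finset.sum_congr rfl fun i _ => by rw [← Finset.sum_sub_distrib]
      _ = 0 := by rw [h1, sub_self]
  have hD0 : ∀ i j, D i j = 0 := by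
    intro i j
    have := li_conj_maps hmin (fun i j => (ε:ℂ) * D i j) hzero i j
    have hεne : (ε : ℂ) ≠ 0 := by
      simp only [ne_eq, Complex.ofReal_eq_zero]
      exact hεpos.ne'
    exact (mul_eq_zero.mp this).resolve_left hεne
  -- contradiction with g p₀ ≠ 0
  apply hg0
  obtain ⟨⟨i, j⟩, hij⟩ := p₀
  have hHr0 : ∀ a b, Hr a b = 0 := by
    intro a b
    have h := hD0 a b
    rw [hD] at h
    simp only at h
    exact_mod_cast h
  by_cases hd : i = j
  · subst hd
    have hval : Hr i i = 2 * g ⟨(i,i), hij⟩ := by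
      show (if h : i ≤ i then (if i = i then 2 * g ⟨(i,i), h⟩ else g ⟨(i,i), h⟩)
          else g ⟨(i,i), (not_le.mp h).le⟩) = 2 * g ⟨(i,i), hij⟩
      rw [dif_pos (le_refl i), if_pos rfl]
    have h0 := hHr0 i i
    rw [hval] at h0
    linarith
  · have hval : Hr i j = g ⟨(i,j), hij⟩ := by
      show (if h : i ≤ j then (if i = j then 2 * g ⟨(i,j), h⟩ else g ⟨(i,j), h⟩)
          else g ⟨(j,i), (not_le.mp h).le⟩) = g ⟨(i,j), hij⟩
      rw [dif_pos hij, if_neg hd]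
    have h0 := hHr0 i j
    rw [hval] at h0
    exact h0

lemma backward_dir (σ : Mat N) (hσ : σ.PosDef) (Φ : Mat N →ₗ[ℂ] Mat N) (hΦu : Φ 1 = 1)
    {M : ℕ} (V : Fin M → Mat N) (hmin : LinearIndependent ℂ V)
    (hV : ∀ j, mpow σ hσ (-(1/2)) * V j * mpow σ hσ (1/2) = (V j)ᴴ)
    (hrep : ∀ A, Φ A = ∑ j, (V j)ᴴ * A * V j)
    (hLI : LinearIndependent ℝ
      (fun p : {p : Fin M × Fin M // p.1 ≤ p.2} =>
        (V p.1.1)ᴴ * V p.1.2 + (V p.1.2)ᴴ * V p.1.1))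
    (Ψ₁ Ψ₂ : Mat N →ₗ[ℂ] Mat N)
    (hcp1 : IsCP Ψ₁) (hsa1 : IsKMSSelfAdjoint σ hσ Ψ₁) (hu1 : Ψ₁ 1 = 1)
    (hcp2 : IsCP Ψ₂) (hsa2 : IsKMSSelfAdjoint σ hσ Ψ₂) (hu2 : Ψ₂ 1 = 1)
    (t : ℝ) (ht0 : 0 < t) (ht1 : t < 1)
    (heq : Φ = (t : ℂ) • Ψ₁ + ((1 - t : ℝ) : ℂ) • Ψ₂) : Ψ₁ = Φ ∧ Ψ₂ = Φ := by
  classical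
  obtain ⟨K₁, W, hW⟩ := hcp1
  obtain ⟨K₂, U, hU⟩ := hcp2
  set st : ℂ := ((Real.sqrt t : ℝ) : ℂ) with hst
  set su : ℂ := ((Real.sqrt (1 - t) : ℝ) : ℂ) with hsu
  have hsq_t : star st * st = ((t : ℝ) : ℂ) := by
    rw [hst, Complex.star_def, Complex.conj_ofReal, ← Complex.ofReal_mul,
      Real.mul_self_sqrt ht0.le]
  have hsq_u : star su * su = ((1 - t : ℝ) : ℂ) := by
    rw [hsu, Complex.star_def, Complex.conj_ofReal, ← Complex.ofReal_mul,
      Real.mul_self_sqrt (by linarith)]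
  set X : Fin (K₁ + K₂) → Mat N :=
    fun k => Fin.addCases (fun k1 => st • W k1) (fun k2 => su • U k2) k with hXdef
  have hXl : ∀ k : Fin K₁, X (Fin.castAdd K₂ k) = st • W k := by
    intro k; rw [hXdef]; exact Fin.addCases_left k
  have hXr : ∀ k : Fin K₂, X (Fin.natAdd K₁ k) = su • U k := by
    intro k; rw [hXdef]; exact Fin.addCases_right k
  have smul_sandwich : ∀ (c : ℂ) (Y A : Mat N),
      (c • Y)ᴴ * A * (c • Y) = (star c * c) • (Yᴴ * A * Y) := by
    intro c Y A
    rw [Matrix.conjTranspose_smul, Matrix.smul_mul, Matrix.smul_mul, Matrix.mul_smul,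
      smul_smul]
  have hX : ∀ A : Mat N, ∑ j, (V j)ᴴ * A * V j = ∑ k, (X k)ᴴ * A * (X k) := by
    intro A
    rw [Fin.sum_univ_add]
    have h1 : ∀ k : Fin K₁, (X (Fin.castAdd K₂ k))ᴴ * A * X (Fin.castAdd K₂ k)
        = ((t : ℝ) : ℂ) • ((W k)ᴴ * A * W k) := by
      intro k
      rw [hXl k, smul_sandwich, hsq_t]
    have h2 : ∀ k : Fin K₂, (X (Fin.natAdd K₁ k))ᴴ * A * X (Fin.natAdd K₁ k)
        = ((1 - t : ℝ) : ℂ) • ((U k)ᴴ * A * U k) := by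
      intro k
      rw [hXr k, smul_sandwich, hsq_u]
    calc ∑ j, (V j)ᴴ * A * V j = Φ A := (hrep A).symm
      _ = ((t : ℝ) : ℂ) • Ψ₁ A + ((1 - t : ℝ) : ℂ) • Ψ₂ A := by
          rw [heq]
          simp [LinearMap.add_apply, LinearMap.smul_apply]
      _ = (∑ k : Fin K₁, ((t : ℝ) : ℂ) • ((W k)ᴴ * A * W k))
            + ∑ k : Fin K₂, ((1 - t : ℝ) : ℂ) • ((U k)ᴴ * A * U k) := by
          rw [hW A, hU A, Finset.smul_sum, Finset.smul_sum]
      _ = _ := by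
          congr 1
          · exact Finset.sum_congr rfl fun k _ => (h1 k).symm
          · exact Finset.sum_congr rfl fun k _ => (h2 k).symm
  choose u hu using fun k => kraus_span V X hX k
  have htne : ((t : ℝ) : ℂ) ≠ 0 := by
    simp only [ne_eq, Complex.ofReal_eq_zero]
    exact ht0.ne'
  set T : Fin M → Fin M → ℂ := fun i j =>
    ((t : ℝ) : ℂ)⁻¹ * ∑ k : Fin K₁,
      star (u (Fin.castAdd K₂ k) i) * u (Fin.castAdd K₂ k) j with hT
  have hpsi1 : ∀ A, Ψ₁ A = psiT V T A := by
    intro A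
    have h1 : ((t : ℝ) : ℂ) • Ψ₁ A
        = ∑ k : Fin K₁, (X (Fin.castAdd K₂ k))ᴴ * A * X (Fin.castAdd K₂ k) := by
      rw [hW A, Finset.smul_sum]
      refine Finset.sum_congr rfl fun k _ => ?_
      rw [hXl k, smul_sandwich, hsq_t]
    have h2 : ∀ k : Fin K₁, (X (Fin.castAdd K₂ k))ᴴ * A * X (Fin.castAdd K₂ k)
        = ∑ i, ∑ j, (star (u (Fin.castAdd K₂ k) i) * u (Fin.castAdd K₂ k) j) •
            ((V i)ᴴ * A * V j) := by
      intro k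
      rw [hu (Fin.castAdd K₂ k)]
      exact sandwich_expand V (u (Fin.castAdd K₂ k)) A
    have h3 : ((t : ℝ) : ℂ) • Ψ₁ A
        = ∑ i, ∑ j, (∑ k : Fin K₁,
            star (u (Fin.castAdd K₂ k) i) * u (Fin.castAdd K₂ k) j) •
              ((V i)ᴴ * A * V j) := by
      rw [h1]
      calc ∑ k : Fin K₁, (X (Fin.castAdd K₂ k))ᴴ * A * X (Fin.castAdd K₂ k)
          = ∑ k : Fin K₁, ∑ i, ∑ j, (star (u (Fin.castAdd K₂ k) i) *
              u (Fin.castAdd K₂ k) j) • ((V i)ᴴ * A * V j) :=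
            Finset.sum_congr rfl fun k _ => h2 k
        _ = ∑ i, ∑ k : Fin K₁, ∑ j, (star (u (Fin.castAdd K₂ k) i) *
              u (Fin.castAdd K₂ k) j) • ((V i)ᴴ * A * V j) := Finset.sum_comm
        _ = ∑ i, ∑ j, ∑ k : Fin K₁, (star (u (Fin.castAdd K₂ k) i) *
              u (Fin.castAdd K₂ k) j) • ((V i)ᴴ * A * V j) :=
            Finset.sum_congr rfl fun i _ => Finset.sum_comm
        _ = _ := by
            refine Finset.sum_congr rfl fun i _ => Finset.sum_congr rfl fun j _ => ?_
            rw [Finset.sum_smul]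
    calc Ψ₁ A = ((t : ℝ) : ℂ)⁻¹ • (((t : ℝ) : ℂ) • Ψ₁ A) := by
          rw [smul_smul, inv_mul_cancel₀ htne, one_smul]
      _ = psiT V T A := by
          rw [h3, psiT_apply, Finset.smul_sum]
          refine Finset.sum_congr rfl fun i _ => ?_
          rw [Finset.smul_sum]
          refine Finset.sum_congr rfl fun j _ => ?_
          rw [smul_smul]
  have hΨ₁T : Ψ₁ = psiT V T := LinearMap.ext hpsi1
  have hTherm : ∀ i j, star (T i j) = T j i := by
    intro i j
    rw [hT]
    simp only
    rw [star_mul', star_sum]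
    congr 1
    · rw [star_inv₀, Complex.star_def, Complex.conj_ofReal]
    · refine Finset.sum_congr rfl fun k _ => ?_
      rw [star_mul', star_star, mul_comm]
  have hTreal : ∀ i j, star (T i j) = T i j := by
    apply psiT_kms_real σ hσ V hV hmin T
    intro A B
    have := hsa1 A B
    rw [hΨ₁T] at this
    exact this
  have hTsymm : ∀ i j, T j i = T i j := fun i j => (hTherm i j).symm.trans (hTreal i j)
  set D : Fin M → Fin M → ℂ := fun i j => T i j - (if i = j then 1 else 0) with hD
  have hDsymm : ∀ i j, D j i = D i j := by
    intro i j
    rw [hD]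
    simp only
    rw [hTsymm i j]
    congr 1
    by_cases h : i = j
    · simp [h]
    · rw [if_neg h, if_neg (Ne.symm h)]
  have hDstar : ∀ i j, star (D i j) = D i j := by
    intro i j
    rw [hD]
    simp only
    rw [star_sub, hTreal]
    congr 1
    split <;> simp
  -- unitality gives the relation
  have hΦdiag : ∀ A, Φ A = ∑ i, ∑ j, (if i = j then (1:ℂ) else 0) • ((V i)ᴴ * A * V j) := by
    intro A
    rw [hrep A]
    exact (_root_.diag_sum (fun i j => (V i)ᴴ * A * V j)).symm
  have hD0sum : ∑ i, ∑ j, D i j • ((V i)ᴴ * V j) = 0 := by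
    have e1 : ∑ i, ∑ j, T i j • ((V i)ᴴ * V j) = 1 := by
      have := hu1
      rw [hΨ₁T, psiT_apply] at this
      rw [← this]
      refine Finset.sum_congr rfl fun i _ => Finset.sum_congr rfl fun j _ => by
        rw [Matrix.mul_one]
    have e2 : ∑ i, ∑ j, (if i = j then (1:ℂ) else 0) • ((V i)ᴴ * V j) = 1 := by
      have h1 : ∑ i, ∑ j, (if i = j then (1:ℂ) else 0) • ((V i)ᴴ * 1 * V j) = 1 :=
        (hΦdiag 1).symm.trans hΦu
      rw [← h1]
      refine Finset.sum_congr rfl fun i _ => Finset.sum_congr rfl fun j _ => by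
        rw [Matrix.mul_one]
    calc ∑ i, ∑ j, D i j • ((V i)ᴴ * V j)
        = (∑ i, ∑ j, T i j • ((V i)ᴴ * V j))
          - ∑ i, ∑ j, (if i = j then (1:ℂ) else 0) • ((V i)ᴴ * V j) := by
          rw [← Finset.sum_sub_distrib]
          refine Finset.sum_congr rfl fun i _ => ?_
          rw [← Finset.sum_sub_distrib]
          refine Finset.sum_congr rfl fun j _ => ?_
          rw [hD, ← sub_smul]
      _ = 0 := by rw [e1, e2, sub_self]
  -- regroup and apply linear independence
  have hregroup := sym_regroup D hDsymm (fun i j => (V i)ᴴ * V j)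
  rw [hD0sum] at hregroup
  set gr : {p : Fin M × Fin M // p.1 ≤ p.2} → ℝ := fun p =>
    if p.1.1 = p.1.2 then (2:ℝ)⁻¹ * (D p.1.1 p.1.2).re else (D p.1.1 p.1.2).re with hgr
  have hgrsum : ∑ p : {p : Fin M × Fin M // p.1 ≤ p.2},
      gr p • ((V p.1.1)ᴴ * V p.1.2 + (V p.1.2)ᴴ * V p.1.1) = 0 := by
    have hstep : ∀ p : {p : Fin M × Fin M // p.1 ≤ p.2},
        gr p • ((V p.1.1)ᴴ * V p.1.2 + (V p.1.2)ᴴ * V p.1.1)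
        = (if p.1.1 = p.1.2 then (2:ℂ)⁻¹ * D p.1.1 p.1.2 else D p.1.1 p.1.2) •
            ((V p.1.1)ᴴ * V p.1.2 + (V p.1.2)ᴴ * V p.1.1) := by
      intro p
      have hDre : D p.1.1 p.1.2 = (((D p.1.1 p.1.2).re : ℝ) : ℂ) :=
        real_entry_of_star_eq (hDstar _ _)
      rw [← algebraMap_smul ℂ (gr p)
        ((V p.1.1)ᴴ * V p.1.2 + (V p.1.2)ᴴ * V p.1.1)]
      congr 1
      rw [Complex.coe_algebraMap, hgr]
      by_cases h : p.1.1 = p.1.2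
      · simp only [if_pos h]
        push_cast
        rw [← hDre]
      · simp only [if_neg h]
        exact hDre.symm
    calc ∑ p : {p : Fin M × Fin M // p.1 ≤ p.2},
        gr p • ((V p.1.1)ᴴ * V p.1.2 + (V p.1.2)ᴴ * V p.1.1)
        = ∑ p : {p : Fin M × Fin M // p.1 ≤ p.2},
            (if p.1.1 = p.1.2 then (2:ℂ)⁻¹ * D p.1.1 p.1.2 else D p.1.1 p.1.2) •
              ((V p.1.1)ᴴ * V p.1.2 + (V p.1.2)ᴴ * V p.1.1) :=
          Finset.sum_congr rfl fun p _ => hstep p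
      _ = 0 := hregroup.symm
  have hgr0 := Fintype.linearIndependent_iff.mp hLI gr hgrsum
  have hD0 : ∀ i j, D i j = 0 := by
    have haux : ∀ i j, i ≤ j → D i j = 0 := by
      intro i j hij
      have hp := hgr0 ⟨(i, j), hij⟩
      rw [hgr] at hp
      simp only at hp
      have hDre : D i j = (((D i j).re : ℝ) : ℂ) := real_entry_of_star_eq (hDstar _ _)
      by_cases h : i = j
      · rw [if_pos h] at hp
        have : (D i j).re = 0 := by
          have h2 : (2:ℝ)⁻¹ ≠ 0 := by norm_num
          exact (mul_eq_zero.mp hp).resolve_left h2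
        rw [hDre, this]
        norm_num
      · rw [if_neg h] at hp
        rw [hDre, hp]
        norm_num
    intro i j
    rcases le_or_gt i j with hij | hij
    · exact haux i j hij
    · rw [← hDsymm]
      exact haux j i hij.le
  have hTδ : ∀ i j, T i j = if i = j then (1:ℂ) else 0 := by
    intro i j
    have := hD0 i j
    rw [hD] at this
    simp only at this
    exact sub_eq_zero.mp this
  have hΨ₁Φ : Ψ₁ = Φ := by
    apply LinearMap.ext
    intro A
    rw [hpsi1 A, psiT_apply, hΦdiag A]
    exact Finset.sum_congr rfl fun i _ => Finset.sum_congr rfl fun j _ => by rw [hTδ]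
  have hΨ₂Φ : Ψ₂ = Φ := by
    have hne : ((1 - t : ℝ) : ℂ) ≠ 0 := by
      simp only [ne_eq, Complex.ofReal_eq_zero]
      intro h
      linarith [sub_eq_zero.mp h]
    have h := heq
    rw [hΨ₁Φ] at h
    have h2 : ((1 - t : ℝ) : ℂ) • Ψ₂ = Φ - (t : ℂ) • Φ := eq_sub_of_add_eq' h.symm
    have h3 : Φ - (t : ℂ) • Φ = ((1 - t : ℝ) : ℂ) • Φ := by
      have hc : ((1 - t : ℝ) : ℂ) = 1 - (t : ℂ) := by push_cast; ring
      rw [hc]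
      module
    exact smul_right_injective _ hne (h2.trans h3)
  exact ⟨hΨ₁Φ, hΨ₂Φ⟩

/-- A unital CP map `Φ` that is KMS self-adjoint, with minimal Kraus
representation `Φ(A) = Σ_j Vⱼᴴ A Vⱼ`, `σ^{-1/2} Vⱼ σ^{1/2} = Vⱼᴴ`, is an extreme point of
the convex set of unital KMS self-adjoint CP maps iff the family
`{Vᵢᴴ Vⱼ + Vⱼᴴ Vᵢ : i ≤ j}` is linearly independent over `ℝ`. -/
theorem kms_unital_extreme_iff (N : ℕ) (hN : 2 ≤ N) (σ : Mat N) (hσ : σ.PosDef)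
    (htr : σ.trace = 1) (Φ : Mat N →ₗ[ℂ] Mat N)
    (hΦcp : IsCP Φ) (hΦsa : IsKMSSelfAdjoint σ hσ Φ) (hΦu : Φ 1 = 1)
    (M : ℕ) (V : Fin M → Mat N) (hmin : LinearIndependent ℂ V)
    (hV : ∀ j, mpow σ hσ (-(1/2)) * V j * mpow σ hσ (1/2) = (V j)ᴴ)
    (hrep : ∀ A, Φ A = ∑ j, (V j)ᴴ * A * V j) :
    (∀ Ψ₁ Ψ₂ : Mat N →ₗ[ℂ] Mat N,
        IsCP Ψ₁ → IsKMSSelfAdjoint σ hσ Ψ₁ → Ψ₁ 1 = 1 →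
        IsCP Ψ₂ → IsKMSSelfAdjoint σ hσ Ψ₂ → Ψ₂ 1 = 1 →
        ∀ t : ℝ, 0 < t → t < 1 →
          Φ = (t : ℂ) • Ψ₁ + ((1 - t : ℝ) : ℂ) • Ψ₂ → Ψ₁ = Φ ∧ Ψ₂ = Φ) ↔
      LinearIndependent ℝ
        (fun p : {p : Fin M × Fin M // p.1 ≤ p.2} =>
          (V p.1.1)ᴴ * V p.1.2 + (V p.1.2)ᴴ * V p.1.1) := by
  constructor
  · intro hext
    exact forward_dir σ hσ Φ hΦu V hmin hV hrep hext
  · intro hLI Ψ₁ Ψ₂ hcp1 hsa1 hu1 hcp2 hsa2 hu2 t ht0 ht1 heq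
    exact backward_dir σ hσ Φ hΦu V hmin hV hrep hLI Ψ₁ Ψ₂ hcp1 hsa1 hu1 hcp2 hsa2 hu2 t ht0 ht1 heq
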